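/- Let B_{k,i}(n) be the basis solutions of the k-generalized Fibonacci recurrence with B_{k,i}(n) = δ_{in} for 0 ≤ n ≤ k-1, and let F_k = B_{k,k-1}. Then for 0 ≤ i ≤ k-2 and all n ≥ k, B_{k,i}(n) = ∑_{s=0}^{i} F_k(n-s-1). -/

import Mathlib

open Finset

theorem stmt_15 (k : ℕ) (hk : 2 ≤ k)
    (B : Fin k → ℕ → ℤ)
    (hinit : ∀ (i : Fin k) (n : ℕ), n < k → B i n = if (i : ℕ) = n then 1 else 0)
    (hrec : ∀ (i : Fin k) (n : ℕ), k ≤ n → B i n = ∑ j ∈ range k, B i (n - (j + 1)))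
    (i : Fin k) (hi : (i : ℕ) ≤ k - 2) (n : ℕ) (hn : k ≤ n) :
    B i n = ∑ s ∈ range ((i : ℕ) + 1), B ⟨k - 1, by omega⟩ (n - s - 1) := by
  have hk1 : k - 1 < k := by omega
  have hik : (i : ℕ) < k := i.2
  -- F vanishes below k-1
  have hF0 : ∀ m : ℕ, m < k - 1 → B ⟨k - 1, hk1⟩ m = 0 := by
    intro m hm
    rw [hinit _ m (by omega)]
    simp only [Fin.val_mk]
    rw [if_neg (by omega)]
  induction n using Nat.strong_induction_on with
  | _ n ih =>
    show B i n = ∑ s ∈ range ((i : ℕ) + 1), B ⟨k - 1, hk1⟩ (n - s - 1)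
    have hA : ∀ j ∈ range k, B i (n - (j + 1)) =
        (∑ s ∈ range ((i : ℕ) + 1), B ⟨k - 1, hk1⟩ (n - (j + s + 2)))
          + (if (i : ℕ) + j + 1 = n then 1 else 0) := by
      intro j hj
      simp only [mem_range] at hj
      by_cases hjm : k ≤ n - (j + 1)
      · rw [ih (n - (j + 1)) (by omega) hjm, if_neg (by omega), add_zero]
        refine Finset.sum_congr rfl fun s hs => ?_
        congr 1
        omega
      · rw [hinit i (n - (j + 1)) (by omega)]
        rw [Finset.sum_eq_zero (fun s hs => by
          simp only [mem_range] at hs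
          exact hF0 _ (by omega)), zero_add]
        split_ifs <;> omega
    have hB : ∀ s ∈ range ((i : ℕ) + 1), B ⟨k - 1, hk1⟩ (n - s - 1) =
        (∑ j ∈ range k, B ⟨k - 1, hk1⟩ (n - (j + s + 2)))
          + (if s + k = n then 1 else 0) := by
      intro s hs
      simp only [mem_range] at hs
      by_cases hsm : k ≤ n - s - 1
      · rw [hrec _ (n - s - 1) hsm, if_neg (by omega), add_zero]
        refine Finset.sum_congr rfl fun j hj => ?_
        congr 1
        omega
      · rw [hinit _ (n - s - 1) (by omega)]
        rw [Finset.sum_eq_zero (fun j hj => by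
          simp only [mem_range] at hj
          exact hF0 _ (by omega)), zero_add]
        simp only [Fin.val_mk]
        split_ifs <;> omega
    have e1 : (∑ j ∈ range k, if (i : ℕ) + j + 1 = n then (1 : ℤ) else 0)
        = if n ≤ k + (i : ℕ) then 1 else 0 := by
      rw [Finset.sum_congr rfl (fun j hj => show (if (i : ℕ) + j + 1 = n then (1:ℤ) else 0)
            = if j = n - ((i : ℕ) + 1) then 1 else 0 from by
          simp only [mem_range] at hj; split_ifs <;> omega)]
      rw [Finset.sum_ite_eq' (range k) (n - ((i : ℕ) + 1)) (fun _ => (1 : ℤ))]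
      simp only [mem_range]
      split_ifs <;> omega
    have e2 : (∑ s ∈ range ((i : ℕ) + 1), if s + k = n then (1 : ℤ) else 0)
        = if n ≤ k + (i : ℕ) then 1 else 0 := by
      rw [Finset.sum_congr rfl (fun s hs => show (if s + k = n then (1:ℤ) else 0)
            = if s = n - k then 1 else 0 from by
          simp only [mem_range] at hs; split_ifs <;> omega)]
      rw [Finset.sum_ite_eq' (range ((i : ℕ) + 1)) (n - k) (fun _ => (1 : ℤ))]
      simp only [mem_range]
      split_ifs <;> omega
    rw [hrec i n hn, Finset.sum_congr rfl hA, Finset.sum_add_distrib, e1,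
        Finset.sum_congr rfl hB, Finset.sum_add_distrib, e2, Finset.sum_comm]
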